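/- Let T be an infinite rooted tree, k ≥ 1 a natural number, and f : T → ℂ in the iterated logarithmic Lipschitz space L^(k), with ‖f‖_k = |f(o)| + sup_{v≠o} |f'(v)|·Λ_k(|v|). Then for every vertex v ≠ o, |f(v)| ≤ ℓ_k(|v|)·‖f‖_k. -/

import Mathlib

open Real Filter

/-- Iterated logarithm: ℓ₀(x) = x, ℓ_{j+1}(x) = 1 + log ℓ_j(x). -/
noncomputable def ell : ℕ → ℝ → ℝ
  | 0, x => x
  | j + 1, x => 1 + Real.log (ell j x)

/-- Λ_k(x) = ∏_{j=0}^{k-1} ℓ_j(x). -/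
noncomputable def Lam (k : ℕ) (x : ℝ) : ℝ := ∏ j ∈ Finset.range k, ell j x

/-- Discrete derivative of f on a rooted tree given by a parent map:
`f v - f (parent v)` (automatically 0 at the root since `parent o = o`). -/
def Der {V : Type*} (parent : V → V) (f : V → ℂ) (v : V) : ℂ := f v - f (parent v)

/-- The set of values |f'(v)|·Λ_k(|v|) over v ≠ o; f ∈ L^(k) iff this set is bounded above. -/
def lipSet {V : Type*} (o : V) (parent : V → V) (depth : V → ℕ) (k : ℕ) (f : V → ℂ) : Set ℝ :=
  {r | ∃ v, v ≠ o ∧ r = ‖Der parent f v‖ * Lam k (depth v)}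

/-- ‖f‖_k = |f(o)| + sup_{v ≠ o} |f'(v)|·Λ_k(|v|). -/
noncomputable def lipNorm {V : Type*} (o : V) (parent : V → V) (depth : V → ℕ) (k : ℕ)
    (f : V → ℂ) : ℝ :=
  ‖f o‖ + sSup (lipSet o parent depth k f)

lemma one_le_ell (k : ℕ) {x : ℝ} (hx : 1 ≤ x) : 1 ≤ ell k x := by
  induction k with
  | zero => exact hx
  | succ k ih => simpa [ell] using Real.log_nonneg ih

lemma one_le_Lam (k : ℕ) {x : ℝ} (hx : 1 ≤ x) : 1 ≤ Lam k x := by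
  induction k with
  | zero => simp [Lam]
  | succ k ih =>
    have h1 := one_le_ell k hx
    have : Lam (k+1) x = Lam k x * ell k x := Finset.prod_range_succ _ _
    rw [this]
    nlinarith

lemma ell_one (k : ℕ) : ell k 1 = 1 := by
  induction k with
  | zero => rfl
  | succ k ih => simp [ell, ih]

lemma Lam_one (k : ℕ) : Lam k 1 = 1 := by
  simp [Lam, ell_one]

lemma ell_diff (k : ℕ) {x y : ℝ} (hx : 1 ≤ x) (hxy : x ≤ y) :
    (y - x) / Lam k y ≤ ell k y - ell k x := by
  induction k with
  | zero => simp [Lam, ell]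
  | succ k ih =>
    have hy : 1 ≤ y := hx.trans hxy
    have hLam : 1 ≤ Lam k y := one_le_Lam k hy
    have ha : 1 ≤ ell k x := one_le_ell k hx
    have hb : 1 ≤ ell k y := one_le_ell k hy
    have hab : ell k x ≤ ell k y := by
      have h0 : 0 ≤ (y - x) / Lam k y := div_nonneg (by linarith) (by linarith)
      linarith
    have hlog : (ell k y - ell k x) / ell k y ≤ Real.log (ell k y) - Real.log (ell k x) := by
      have h1 : Real.log (ell k x / ell k y) ≤ ell k x / ell k y - 1 :=
        Real.log_le_sub_one_of_pos (by positivity)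
      rw [Real.log_div (by linarith) (by linarith)] at h1
      have h2 : (ell k y - ell k x) / ell k y = 1 - ell k x / ell k y := by
        field_simp
      linarith [h1, h2]
    have hLamsucc : Lam (k+1) y = Lam k y * ell k y := Finset.prod_range_succ _ _
    have step1 : (y - x) / Lam (k+1) y = ((y - x) / Lam k y) / ell k y := by
      rw [hLamsucc, div_div]
    have step2 : ((y - x) / Lam k y) / ell k y ≤ (ell k y - ell k x) / ell k y :=
      (div_le_div_iff_of_pos_right (by linarith)).mpr (by linarith)
    have final : ell (k+1) y - ell (k+1) x = Real.log (ell k y) - Real.log (ell k x) := by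
      simp [ell]
    rw [step1, final]
    linarith

lemma sum_inv_Lam_le (k n : ℕ) (hn : 1 ≤ n) :
    ∑ j ∈ Finset.Icc 1 n, (Lam k (j : ℝ))⁻¹ ≤ ell k (n : ℝ) := by
  induction n, hn using Nat.le_induction with
  | base => simp [Lam_one, ell_one]
  | succ n hn ih =>
    rw [Finset.sum_Icc_succ_top (by omega)]
    have h := ell_diff k (x := (n : ℝ)) (y := ((n : ℝ) + 1)) (by exact_mod_cast hn)
      (by linarith)
    have hn0 : (0 : ℝ) ≤ (n : ℝ) := Nat.cast_nonneg n
    have hL : 1 ≤ Lam k ((n : ℝ) + 1) := one_le_Lam k (by linarith)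
    have hinv : (Lam k ((n : ℝ) + 1))⁻¹ ≤ ell k ((n : ℝ) + 1) - ell k (n : ℝ) := by
      have : ((n : ℝ) + 1 - n) = 1 := by ring
      rw [this] at h
      rwa [inv_eq_one_div]
    push_cast
    linarith

/-- Point-evaluation bound for L^(k), k ≥ 1: |f(v)| ≤ ℓ_k(|v|)·‖f‖_k for v ≠ o. -/
theorem pointEval_Lk {V : Type*} (o : V) (parent : V → V) (depth : V → ℕ)
    (hpar : parent o = o) (hdepth0 : depth o = 0)
    (hdepth : ∀ v, v ≠ o → depth v = depth (parent v) + 1)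
    (hchild : ∀ v, ∃ w, w ≠ o ∧ parent w = v)
    (k : ℕ) (hk : 1 ≤ k)
    (f : V → ℂ) (hf : BddAbove (lipSet o parent depth k f)) :
    ∀ v, v ≠ o →
      ‖f v‖ ≤ ell k (depth v) * lipNorm o parent depth k f := by
  set L := sSup (lipSet o parent depth k f) with hLdef
  obtain ⟨w, hw, hpw⟩ := hchild o
  have hmemw : ‖Der parent f w‖ * Lam k (depth w) ∈ lipSet o parent depth k f :=
    ⟨w, hw, rfl⟩
  have hdw : 1 ≤ depth w := by rw [hdepth w hw]; omega
  have hL0 : 0 ≤ L := by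
    refine le_trans ?_ (le_csSup hf hmemw)
    have : (1 : ℝ) ≤ Lam k (depth w) := one_le_Lam k (by exact_mod_cast hdw)
    positivity
  have hDer : ∀ v, v ≠ o →
      ‖Der parent f v‖ ≤ L * (Lam k (depth v : ℝ))⁻¹ := by
    intro v hv
    have hdv : 1 ≤ depth v := by rw [hdepth v hv]; omega
    have hLam : 1 ≤ Lam k (depth v : ℝ) := one_le_Lam k (by exact_mod_cast hdv)
    have hmem : ‖Der parent f v‖ * Lam k (depth v) ≤ L :=
      le_csSup hf ⟨v, hv, rfl⟩
    rw [← div_eq_mul_inv, le_div_iff₀ (by linarith)]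
    exact hmem
  have key : ∀ n, ∀ v, v ≠ o → depth v = n →
      ‖f v‖ ≤ ‖f o‖
        + L * ∑ j ∈ Finset.Icc 1 n, (Lam k (j : ℝ))⁻¹ := by
    intro n
    induction n using Nat.strong_induction_on with
    | _ n ih =>
      intro v hv hdv
      have hn : n = depth (parent v) + 1 := by rw [← hdv, hdepth v hv]
      have h1 : ‖f v‖
          ≤ ‖f (parent v)‖ + ‖Der parent f v‖ := by
        have : f v = f (parent v) + Der parent f v := by simp [Der]
        rw [this]
        exact norm_add_le _ _
      have h2 : ‖f (parent v)‖ ≤ ‖f o‖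
          + L * ∑ j ∈ Finset.Icc 1 (depth (parent v)), (Lam k (j : ℝ))⁻¹ := by
        by_cases hpv : parent v = o
        · rw [hpv, hdepth0]
          simp
        · exact ih (depth (parent v)) (by omega) (parent v) hpv rfl
      have h3 := hDer v hv
      have hinv0 : 0 ≤ (Lam k (depth v : ℝ))⁻¹ := by
        have hdv1 : 1 ≤ depth v := by rw [hdepth v hv]; omega
        have := one_le_Lam k (x := (depth v : ℝ)) (by exact_mod_cast hdv1)
        positivity
      rw [hn, Finset.sum_Icc_succ_top (by omega)]
      have hcast : ((depth (parent v) + 1 : ℕ) : ℝ) = (depth (parent v) : ℝ) + 1 := by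
        push_cast; ring
      have hdvr : (depth v : ℝ) = (depth (parent v) : ℝ) + 1 := by
        rw [hdepth v hv]; push_cast; ring
      rw [hcast, ← hdvr, mul_add]
      linarith
  intro v hv
  have hdv1 : 1 ≤ depth v := by rw [hdepth v hv]; omega
  have hsum := sum_inv_Lam_le k (depth v) hdv1
  have hkey := key (depth v) v hv rfl
  have hell : 1 ≤ ell k (depth v : ℝ) := one_le_ell k (by exact_mod_cast hdv1)
  rw [lipNorm, ← hLdef]
  nlinarith [norm_nonneg (f o), hkey, hsum, hL0, hell]
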